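/- Let a, b, c ∈ ℝ with a > 0. Suppose Λ < 0, v is a unit vector in a real inner product space, w is a vector orthogonal to v, and E is a linear map with E v = Λ v − μ w for some μ ∈ ℝ. Then ⟨E v, E v⟩ / ⟨v, E v⟩ = Λ + (μ²/Λ)‖w‖² ≤ Λ. -/

import Mathlib

theorem stmt_16 {H : Type*} [NormedAddCommGroup H] [InnerProductSpace ℝ H]
    (Λ μ : ℝ) (hΛ : Λ < 0) (v w : H) (hv : ‖v‖ = 1)
    (horth : inner ℝ v w = (0 : ℝ)) (E : H →ₗ[ℝ] H)
    (hE : E v = Λ • v - μ • w) :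
    (inner ℝ (E v) (E v) : ℝ) / (inner ℝ v (E v) : ℝ)
      = Λ + (μ ^ 2 / Λ) * ‖w‖ ^ 2 ∧
    Λ + (μ ^ 2 / Λ) * ‖w‖ ^ 2 ≤ Λ := by
  have horth' : inner ℝ w v = (0 : ℝ) := by
    rw [real_inner_comm]; exact horth
  have hvv : inner ℝ v v = (1 : ℝ) := by
    rw [real_inner_self_eq_norm_sq, hv]; norm_num
  have hww : inner ℝ w w = (‖w‖ ^ 2 : ℝ) := real_inner_self_eq_norm_sq w
  have h1 : (inner ℝ v (E v) : ℝ) = Λ := by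
    rw [hE]
    simp [inner_sub_right, inner_smul_right, hvv, horth, hv]
  have h2 : (inner ℝ (E v) (E v) : ℝ) = Λ ^ 2 + μ ^ 2 * ‖w‖ ^ 2 := by
    rw [hE]
    simp only [inner_sub_left, inner_sub_right, inner_smul_left, inner_smul_right,
      RCLike.conj_to_real, hvv, hww, horth, horth']
    ring
  constructor
  · rw [h1, h2]
    rw [add_div, sq, mul_div_assoc, div_self hΛ.ne, mul_one]
    ring
  · have : μ ^ 2 / Λ * ‖w‖ ^ 2 ≤ 0 :=
      mul_nonpos_of_nonpos_of_nonneg (div_nonpos_of_nonneg_of_nonpos (sq_nonneg μ) hΛ.le)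
        (sq_nonneg _)
    linarith
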